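/- Let 0 < z₁, z₂ < 1 and let β(s) = 1 + ∑_{ℓ≥1} b_ℓ s^ℓ with b_ℓ ≥ 0 be finite for |s| < 1. Then the infinite product ∏_{x ∈ X} β(z₁^{x₁} z₂^{x₂}) over X = {x ∈ ℤ₊² : gcd(x₁,x₂)=1} is finite; in particular its logarithm is bounded by β(z₁)/(1−z₁) + β(z₂)/((1−z₁)(1−z₂)). -/

import Mathlib

set_option maxHeartbeats 1000000

def auxEquiv : ℕ × ℕ ≃ {p : ℕ × ℕ | 1 ≤ p.2} where
  toFun := fun p => ⟨(p.1, p.2 + 1), Nat.succ_le_succ (Nat.zero_le _)⟩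
  invFun := fun q => (q.val.1, q.val.2 - 1)
  left_inv := fun p => by simp
  right_inv := fun q => Subtype.ext (Prod.ext rfl (Nat.sub_add_cancel q.2))

lemma aux_geom_bound (r s : ℝ) (hr0 : 0 < r) (hr1 : r < 1) (hs0 : 0 < s) (hs1 : s < 1) :
    Summable (fun x : {x : ℕ × ℕ // Nat.gcd x.1 x.2 = 1} => r ^ x.1.1 * s ^ x.1.2) ∧
    ∑' x : {x : ℕ × ℕ // Nat.gcd x.1 x.2 = 1}, r ^ x.1.1 * s ^ x.1.2 ≤
      r + s / ((1 - r) * (1 - s)) := by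
  have hF : Summable (fun p : ℕ × ℕ => r ^ p.1 * s ^ p.2) :=
    (summable_geometric_of_lt_one hr0.le hr1).mul_of_nonneg
      (summable_geometric_of_lt_one hs0.le hs1)
      (fun n => by positivity) (fun n => by positivity)
  have hX : Summable (fun x : {x : ℕ × ℕ // Nat.gcd x.1 x.2 = 1} => r ^ x.1.1 * s ^ x.1.2) :=
    hF.comp_injective Subtype.val_injective
  refine ⟨hX, ?_⟩
  set S : Set (ℕ × ℕ) := {((1 : ℕ), (0 : ℕ))} ∪ {p : ℕ × ℕ | 1 ≤ p.2} with hS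
  have hsub : ∀ x : {x : ℕ × ℕ // Nat.gcd x.1 x.2 = 1}, x.val ∈ S := by
    rintro ⟨⟨a, c⟩, hx⟩
    rcases c with _ | c
    · left
      simp only [Nat.gcd_zero_right] at hx
      simp [hx]
    · right
      exact Nat.succ_le_succ (Nat.zero_le _)
  have hdisj : Disjoint ({((1 : ℕ), (0 : ℕ))} : Set (ℕ × ℕ)) {p : ℕ × ℕ | 1 ≤ p.2} := by
    rw [Set.disjoint_left]
    rintro p rfl hq
    exact absurd hq (by simp)
  have hgeom : ∑' p : ℕ × ℕ, r ^ p.1 * s ^ p.2 = (1 - r)⁻¹ * (1 - s)⁻¹ := by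
    have hs' : ∀ a : ℕ, Summable (fun b2 : ℕ => r ^ a * s ^ b2) :=
      fun a => (summable_geometric_of_lt_one hs0.le hs1).mul_left (r ^ a)
    rw [Summable.tsum_prod' hF hs']
    have : ∀ a : ℕ, ∑' b2 : ℕ, r ^ a * s ^ b2 = r ^ a * (1 - s)⁻¹ := by
      intro a
      rw [tsum_mul_left, tsum_geometric_of_lt_one hs0.le hs1]
    simp_rw [this]
    rw [tsum_mul_right, tsum_geometric_of_lt_one hr0.le hr1]
  have hB : ∑' q : {p : ℕ × ℕ | 1 ≤ p.2}, r ^ q.val.1 * s ^ q.val.2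
      = s / ((1 - r) * (1 - s)) := by
    rw [← auxEquiv.tsum_eq]
    have : ∀ p : ℕ × ℕ, r ^ (auxEquiv p).val.1 * s ^ (auxEquiv p).val.2
        = s * (r ^ p.1 * s ^ p.2) := by
      intro p
      show r ^ p.1 * s ^ (p.2 + 1) = _
      ring
    simp_rw [this]
    rw [tsum_mul_left, hgeom, div_eq_mul_inv, mul_inv]
  have h1 : ∑' x : {x : ℕ × ℕ // Nat.gcd x.1 x.2 = 1}, r ^ x.1.1 * s ^ x.1.2
      ≤ ∑' y : S, r ^ y.val.1 * s ^ y.val.2 := by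
    refine Summable.tsum_le_tsum_of_inj (fun x => (⟨x.val, hsub x⟩ : S)) ?_ (fun c _ => by positivity)
      (fun x => le_rfl) hX (hF.subtype S)
    intro x y hxy
    have h := congrArg Subtype.val hxy
    exact Subtype.ext h
  refine h1.trans ?_
  have h2 : (∑' y : S, r ^ y.val.1 * s ^ y.val.2)
      = (∑' x : ({((1 : ℕ), (0 : ℕ))} : Set (ℕ × ℕ)), r ^ (x : ℕ × ℕ).1 * s ^ (x : ℕ × ℕ).2)
        + ∑' q : {p : ℕ × ℕ | 1 ≤ p.2}, r ^ q.val.1 * s ^ q.val.2 :=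
    Summable.tsum_union_disjoint hdisj (hF.subtype _) (hF.subtype _)
  have h3 : (∑' x : ({((1 : ℕ), (0 : ℕ))} : Set (ℕ × ℕ)),
      r ^ (x : ℕ × ℕ).1 * s ^ (x : ℕ × ℕ).2) = r ^ 1 * s ^ 0 :=
    tsum_singleton ((1 : ℕ), (0 : ℕ)) (fun p : ℕ × ℕ => r ^ p.1 * s ^ p.2)
  rw [h2, h3, hB]
  simp

theorem stmt_6 (z₁ z₂ : ℝ) (hz₁ : 0 < z₁) (hz₁' : z₁ < 1)
    (hz₂ : 0 < z₂) (hz₂' : z₂ < 1)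
    (b : ℕ → ℝ) (hb : ∀ ℓ, 0 ≤ b ℓ)
    (hβ : ∀ s : ℝ, |s| < 1 → Summable (fun ℓ : ℕ+ => b ℓ * s ^ (ℓ : ℕ)))
    (β : ℝ → ℝ) (hβdef : ∀ s : ℝ, β s = 1 + ∑' ℓ : ℕ+, b ℓ * s ^ (ℓ : ℕ)) :
    Multipliable (fun x : {x : ℕ × ℕ // Nat.gcd x.1 x.2 = 1} =>
      β (z₁ ^ x.1.1 * z₂ ^ x.1.2)) ∧
    ∑' x : {x : ℕ × ℕ // Nat.gcd x.1 x.2 = 1},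
        Real.log (β (z₁ ^ x.1.1 * z₂ ^ x.1.2)) ≤
      β z₁ / (1 - z₁) + β z₂ / ((1 - z₁) * (1 - z₂)) := by
  have c1pos : (0:ℝ) < 1 - z₁ := by linarith
  have c2pos : (0:ℝ) < 1 - z₂ := by linarith
  have habs : ∀ u : ℝ, 0 ≤ u → u < 1 → |u| < 1 := by
    intro u h h'
    rw [abs_of_nonneg h]; exact h'
  have ht0 : ∀ x : {x : ℕ × ℕ // Nat.gcd x.1 x.2 = 1}, 0 < z₁ ^ x.1.1 * z₂ ^ x.1.2 :=
    fun x => by positivity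
  have ht1 : ∀ x : {x : ℕ × ℕ // Nat.gcd x.1 x.2 = 1}, z₁ ^ x.1.1 * z₂ ^ x.1.2 < 1 := by
    rintro ⟨⟨a, c⟩, hx⟩
    rcases a with _ | a
    · simp only [Nat.gcd_zero_left] at hx
      subst hx
      simpa using hz₂'
    · have h1 : z₁ ^ (a + 1) ≤ z₁ := by
        calc z₁ ^ (a + 1) ≤ z₁ ^ 1 := pow_le_pow_of_le_one hz₁.le hz₁'.le (by omega)
          _ = z₁ := pow_one _
      have h2 : z₂ ^ c ≤ 1 := pow_le_one₀ hz₂.le hz₂'.le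
      calc z₁ ^ (a + 1) * z₂ ^ c ≤ z₁ * 1 :=
            mul_le_mul h1 h2 (by positivity) hz₁.le
        _ < 1 := by simpa using hz₁'
  have βge1 : ∀ u : ℝ, 0 ≤ u → u < 1 → 1 ≤ β u := by
    intro u hu hu'
    rw [hβdef u]
    have := tsum_nonneg (L := SummationFilter.unconditional ℕ+) (fun ℓ : ℕ+ => mul_nonneg (hb ℓ) (pow_nonneg hu (ℓ:ℕ)))
    linarith
  -- per-ℓ summability and bound
  have hper : ∀ ℓ : ℕ+,
      Summable (fun x : {x : ℕ × ℕ // Nat.gcd x.1 x.2 = 1} =>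
        b ℓ * (z₁ ^ x.1.1 * z₂ ^ x.1.2) ^ (ℓ:ℕ)) ∧
      ∑' x : {x : ℕ × ℕ // Nat.gcd x.1 x.2 = 1},
          b ℓ * (z₁ ^ x.1.1 * z₂ ^ x.1.2) ^ (ℓ:ℕ) ≤
        b ℓ * z₁ ^ (ℓ:ℕ) * (1/(1-z₁)) + b ℓ * z₂ ^ (ℓ:ℕ) * (1/((1-z₁)*(1-z₂))) := by
    intro ℓ
    have hℓ1 : 1 ≤ (ℓ:ℕ) := ℓ.2
    have hr0 : 0 < z₁ ^ (ℓ:ℕ) := pow_pos hz₁ _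
    have hs0 : 0 < z₂ ^ (ℓ:ℕ) := pow_pos hz₂ _
    have hp1 : z₁ ^ (ℓ:ℕ) ≤ z₁ := by
      calc z₁ ^ (ℓ:ℕ) ≤ z₁ ^ 1 := pow_le_pow_of_le_one hz₁.le hz₁'.le hℓ1
        _ = z₁ := pow_one _
    have hp2 : z₂ ^ (ℓ:ℕ) ≤ z₂ := by
      calc z₂ ^ (ℓ:ℕ) ≤ z₂ ^ 1 := pow_le_pow_of_le_one hz₂.le hz₂'.le hℓ1
        _ = z₂ := pow_one _
    have hr1 : z₁ ^ (ℓ:ℕ) < 1 := lt_of_le_of_lt hp1 hz₁'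
    have hs1 : z₂ ^ (ℓ:ℕ) < 1 := lt_of_le_of_lt hp2 hz₂'
    obtain ⟨hsum, hbound⟩ :=
      aux_geom_bound (z₁ ^ (ℓ:ℕ)) (z₂ ^ (ℓ:ℕ)) hr0 hr1 hs0 hs1
    have hrw : ∀ x : {x : ℕ × ℕ // Nat.gcd x.1 x.2 = 1},
        b ℓ * (z₁ ^ x.1.1 * z₂ ^ x.1.2) ^ (ℓ:ℕ)
          = b ℓ * ((z₁ ^ (ℓ:ℕ)) ^ x.1.1 * (z₂ ^ (ℓ:ℕ)) ^ x.1.2) := by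
      intro x
      rw [mul_pow, ← pow_mul, ← pow_mul, ← pow_mul, ← pow_mul,
        mul_comm x.1.1 (ℓ:ℕ), mul_comm x.1.2 (ℓ:ℕ)]
    constructor
    · exact Summable.congr (hsum.mul_left (b ℓ)) (fun x => (hrw x).symm)
    · have hden : (1-z₁)*(1-z₂) ≤ (1 - z₁ ^ (ℓ:ℕ))*(1 - z₂ ^ (ℓ:ℕ)) :=
        mul_le_mul (by linarith) (by linarith) (by linarith) (by linarith)
      have hdiv : z₂ ^ (ℓ:ℕ) / ((1 - z₁ ^ (ℓ:ℕ)) * (1 - z₂ ^ (ℓ:ℕ)))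
          ≤ z₂ ^ (ℓ:ℕ) * (1/((1-z₁)*(1-z₂))) := by
        rw [mul_one_div]
        apply div_le_div_of_nonneg_left hs0.le (by positivity) hden
      have hone : (1:ℝ) ≤ 1/(1-z₁) := by
        rw [le_div_iff₀ c1pos]; linarith
      have h1' : z₁ ^ (ℓ:ℕ) ≤ z₁ ^ (ℓ:ℕ) * (1/(1-z₁)) := by
        calc z₁ ^ (ℓ:ℕ) = z₁ ^ (ℓ:ℕ) * 1 := by ring
          _ ≤ z₁ ^ (ℓ:ℕ) * (1/(1-z₁)) := mul_le_mul_of_nonneg_left hone hr0.le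
      calc ∑' x : {x : ℕ × ℕ // Nat.gcd x.1 x.2 = 1},
              b ℓ * (z₁ ^ x.1.1 * z₂ ^ x.1.2) ^ (ℓ:ℕ)
          = ∑' x : {x : ℕ × ℕ // Nat.gcd x.1 x.2 = 1},
              b ℓ * ((z₁ ^ (ℓ:ℕ)) ^ x.1.1 * (z₂ ^ (ℓ:ℕ)) ^ x.1.2) := tsum_congr hrw
        _ = b ℓ * ∑' x : {x : ℕ × ℕ // Nat.gcd x.1 x.2 = 1},
              (z₁ ^ (ℓ:ℕ)) ^ x.1.1 * (z₂ ^ (ℓ:ℕ)) ^ x.1.2 := tsum_mul_left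
        _ ≤ b ℓ * (z₁ ^ (ℓ:ℕ) + z₂ ^ (ℓ:ℕ) / ((1 - z₁ ^ (ℓ:ℕ)) * (1 - z₂ ^ (ℓ:ℕ)))) :=
            mul_le_mul_of_nonneg_left hbound (hb ℓ)
        _ = b ℓ * z₁ ^ (ℓ:ℕ)
              + b ℓ * (z₂ ^ (ℓ:ℕ) / ((1 - z₁ ^ (ℓ:ℕ)) * (1 - z₂ ^ (ℓ:ℕ)))) := by ring
        _ ≤ b ℓ * (z₁ ^ (ℓ:ℕ) * (1/(1-z₁)))
              + b ℓ * (z₂ ^ (ℓ:ℕ) * (1/((1-z₁)*(1-z₂)))) :=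
            add_le_add (mul_le_mul_of_nonneg_left h1' (hb ℓ))
              (mul_le_mul_of_nonneg_left hdiv (hb ℓ))
        _ = b ℓ * z₁ ^ (ℓ:ℕ) * (1/(1-z₁)) + b ℓ * z₂ ^ (ℓ:ℕ) * (1/((1-z₁)*(1-z₂))) := by
            ring
  have hz₁abs : |z₁| < 1 := habs z₁ hz₁.le hz₁'
  have hz₂abs : |z₂| < 1 := habs z₂ hz₂.le hz₂'
  have hG : Summable (fun ℓ : ℕ+ =>
      b ℓ * z₁ ^ (ℓ:ℕ) * (1/(1-z₁)) + b ℓ * z₂ ^ (ℓ:ℕ) * (1/((1-z₁)*(1-z₂)))) :=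
    ((hβ z₁ hz₁abs).mul_right _).add ((hβ z₂ hz₂abs).mul_right _)
  have hGsum : ∑' ℓ : ℕ+,
      (b ℓ * z₁ ^ (ℓ:ℕ) * (1/(1-z₁)) + b ℓ * z₂ ^ (ℓ:ℕ) * (1/((1-z₁)*(1-z₂))))
      ≤ β z₁ / (1 - z₁) + β z₂ / ((1 - z₁) * (1 - z₂)) := by
    rw [Summable.tsum_add ((hβ z₁ hz₁abs).mul_right _) ((hβ z₂ hz₂abs).mul_right _),
      tsum_mul_right, tsum_mul_right]
    have e1 : ∑' ℓ : ℕ+, b ℓ * z₁ ^ (ℓ:ℕ) = β z₁ - 1 := by rw [hβdef z₁]; ring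
    have e2 : ∑' ℓ : ℕ+, b ℓ * z₂ ^ (ℓ:ℕ) = β z₂ - 1 := by rw [hβdef z₂]; ring
    rw [e1, e2, mul_one_div, mul_one_div]
    apply add_le_add
    · exact (div_le_div_iff_of_pos_right c1pos).mpr (by linarith)
    · exact (div_le_div_iff_of_pos_right (by positivity)).mpr (by linarith)
  -- the double sum
  set F : ℕ+ × {x : ℕ × ℕ // Nat.gcd x.1 x.2 = 1} → ℝ :=
    fun p => b p.1 * (z₁ ^ p.2.1.1 * z₂ ^ p.2.1.2) ^ (p.1:ℕ) with hFdef
  have hFnonneg : ∀ p, 0 ≤ F p := fun p => mul_nonneg (hb _) (by positivity)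
  have hF : Summable F :=
    (summable_prod_of_nonneg hFnonneg).2
      ⟨fun ℓ => (hper ℓ).1,
       Summable.of_nonneg_of_le (fun ℓ => tsum_nonneg fun x => hFnonneg (ℓ, x))
         (fun ℓ => (hper ℓ).2) hG⟩
  have hFswap : Summable (fun q : {x : ℕ × ℕ // Nat.gcd x.1 x.2 = 1} × ℕ+ => F q.swap) :=
    hF.prod_symm
  have hg : Summable (fun x : {x : ℕ × ℕ // Nat.gcd x.1 x.2 = 1} => ∑' ℓ : ℕ+, F (ℓ, x)) :=
    ((summable_prod_of_nonneg (fun q => hFnonneg q.swap)).1 hFswap).2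
  have hts1 : ∑' x : {x : ℕ × ℕ // Nat.gcd x.1 x.2 = 1}, (∑' ℓ : ℕ+, F (ℓ, x))
      = ∑' q : {x : ℕ × ℕ // Nat.gcd x.1 x.2 = 1} × ℕ+, F q.swap :=
    (Summable.tsum_prod' hFswap (fun x => hFswap.prod_factor x)).symm
  have hts2 : ∑' q : {x : ℕ × ℕ // Nat.gcd x.1 x.2 = 1} × ℕ+, F q.swap
      = ∑' p : ℕ+ × {x : ℕ × ℕ // Nat.gcd x.1 x.2 = 1}, F p :=
    (Equiv.prodComm _ _).tsum_eq F
  have hts3 : ∑' p : ℕ+ × {x : ℕ × ℕ // Nat.gcd x.1 x.2 = 1}, F p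
      = ∑' ℓ : ℕ+, ∑' x : {x : ℕ × ℕ // Nat.gcd x.1 x.2 = 1}, F (ℓ, x) :=
    Summable.tsum_prod' hF (fun ℓ => (hper ℓ).1)
  have hts4 : ∑' ℓ : ℕ+, (∑' x : {x : ℕ × ℕ // Nat.gcd x.1 x.2 = 1}, F (ℓ, x))
      ≤ β z₁ / (1 - z₁) + β z₂ / ((1 - z₁) * (1 - z₂)) := by
    refine le_trans (Summable.tsum_le_tsum (fun ℓ => (hper ℓ).2)
      ((summable_prod_of_nonneg hFnonneg).1 hF).2 hG) hGsum
  have hgtot : ∑' x : {x : ℕ × ℕ // Nat.gcd x.1 x.2 = 1}, (∑' ℓ : ℕ+, F (ℓ, x))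
      ≤ β z₁ / (1 - z₁) + β z₂ / ((1 - z₁) * (1 - z₂)) := by
    rw [hts1, hts2, hts3]; exact hts4
  -- log bounds
  have hgx : ∀ x : {x : ℕ × ℕ // Nat.gcd x.1 x.2 = 1},
      ∑' ℓ : ℕ+, F (ℓ, x) = β (z₁ ^ x.1.1 * z₂ ^ x.1.2) - 1 := by
    intro x
    rw [hβdef]; ring
  have hβpos : ∀ x : {x : ℕ × ℕ // Nat.gcd x.1 x.2 = 1},
      0 < β (z₁ ^ x.1.1 * z₂ ^ x.1.2) :=
    fun x => lt_of_lt_of_le one_pos (βge1 _ (ht0 x).le (ht1 x))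
  have hlog_nonneg : ∀ x : {x : ℕ × ℕ // Nat.gcd x.1 x.2 = 1},
      0 ≤ Real.log (β (z₁ ^ x.1.1 * z₂ ^ x.1.2)) :=
    fun x => Real.log_nonneg (βge1 _ (ht0 x).le (ht1 x))
  have hlog_le : ∀ x : {x : ℕ × ℕ // Nat.gcd x.1 x.2 = 1},
      Real.log (β (z₁ ^ x.1.1 * z₂ ^ x.1.2)) ≤ ∑' ℓ : ℕ+, F (ℓ, x) := by
    intro x
    rw [hgx x]
    exact Real.log_le_sub_one_of_pos (hβpos x)
  have hL : Summable (fun x : {x : ℕ × ℕ // Nat.gcd x.1 x.2 = 1} =>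
      Real.log (β (z₁ ^ x.1.1 * z₂ ^ x.1.2))) :=
    hg.of_nonneg_of_le hlog_nonneg hlog_le
  refine ⟨?_, ?_⟩
  · have hm : Multipliable (fun x : {x : ℕ × ℕ // Nat.gcd x.1 x.2 = 1} =>
        Real.exp (Real.log (β (z₁ ^ x.1.1 * z₂ ^ x.1.2)))) :=
      hL.hasSum.rexp.multipliable
    exact hm.congr (fun x => Real.exp_log (hβpos x))
  · exact le_trans (Summable.tsum_le_tsum hlog_le hL hg) hgtot
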